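/- Let G be a C_3^{(3)}-saturated 3-uniform hypergraph and let j ≥ 2 be an integer. Then every vertex v of G has at most 2j^2 j-far neighbors. -/

import Mathlib

open Finset

variable {V : Type*}

/-- `E` is the edge set of a 3-uniform hypergraph: every edge has 3 vertices. -/
def IsUniform3 [DecidableEq V] (E : Finset (Finset V)) : Prop :=
  ∀ e ∈ E, e.card = 3

/-- `E` contains a copy of the loose cycle `C₃⁽³⁾`: three edges whose pairwise
intersections are three distinct single vertices, with empty triple intersection. -/
def HasC3 [DecidableEq V] (E : Finset (Finset V)) : Prop :=
  ∃ e₁ ∈ E, ∃ e₂ ∈ E, ∃ e₃ ∈ E, ∃ a b c : V,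
    e₁ ∩ e₂ = {a} ∧ e₂ ∩ e₃ = {b} ∧ e₁ ∩ e₃ = {c} ∧
    a ≠ b ∧ b ≠ c ∧ a ≠ c ∧ e₁ ∩ e₂ ∩ e₃ = ∅

/-- `E` is a `C₃⁽³⁾`-saturated 3-uniform hypergraph: it is 3-uniform, `C₃⁽³⁾`-free,
and adding any non-edge triple creates a copy of `C₃⁽³⁾`. -/
def IsSat3 [DecidableEq V] (E : Finset (Finset V)) : Prop :=
  IsUniform3 E ∧ ¬ HasC3 E ∧
    ∀ e : Finset V, e.card = 3 → e ∉ E → HasC3 (insert e E)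

/-- The degree of a vertex: the number of edges containing it. -/
def deg [DecidableEq V] (E : Finset (Finset V)) (v : V) : ℕ :=
  (E.filter fun e => v ∈ e).card

/-- The codegree of a pair of vertices: number of edges containing both. -/
def codeg [DecidableEq V] (E : Finset (Finset V)) (u v : V) : ℕ :=
  (E.filter fun e => u ∈ e ∧ v ∈ e).card

/-- `u` and `v` are distinct and share an edge (`v ∈ N(u)`). -/
def Adj [DecidableEq V] (E : Finset (Finset V)) (u v : V) : Prop :=
  u ≠ v ∧ ∃ e ∈ E, u ∈ e ∧ v ∈ e

/-- `e₁, e₂` form a `u,v`-link: a loose path of two edges from `u` to `v`. -/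
def IsLink [DecidableEq V] (E : Finset (Finset V)) (u v : V) (e₁ e₂ : Finset V) : Prop :=
  e₁ ∈ E ∧ e₂ ∈ E ∧ u ∈ e₁ ∧ v ∈ e₂ ∧ u ∉ e₂ ∧ v ∉ e₁ ∧
    ∃ w, w ∉ ({u, v} : Finset V) ∧ e₁ ∩ e₂ = {w}

/-- `uv` is a good pair: there exists a `u,v`-link. -/
def GoodPair [DecidableEq V] (E : Finset (Finset V)) (u v : V) : Prop :=
  ∃ e₁ e₂, IsLink E u v e₁ e₂

/-- `u` is a `j`-far neighbor of `v`: `d(u) ≤ j`, `u ∈ N(v)`, every edge containing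
`u` either contains `v` or has its other two vertices outside `N(v)`, and every edge
containing `u` but not `v` has all its vertices of degree at most `j`. -/
def JFarNeighbor [DecidableEq V] (E : Finset (Finset V)) (j : ℕ) (v u : V) : Prop :=
  deg E u ≤ j ∧ Adj E v u ∧
    (∀ e ∈ E, u ∈ e → (v ∈ e ∨ ∀ w ∈ e, w ≠ u → ¬ Adj E v w)) ∧
    (∀ e ∈ E, u ∈ e → v ∉ e → ∀ w ∈ e, deg E w ≤ j)

lemma mem_left_of_inter_eq [DecidableEq V] {s f : Finset V} {a : V}
    (h : s ∩ f = {a}) : a ∈ s ∧ a ∈ f := by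
  have : a ∈ s ∩ f := by rw [h]; exact mem_singleton_self a
  exact ⟨(mem_inter.mp this).1, (mem_inter.mp this).2⟩

lemma eq_of_inter_eq [DecidableEq V] {s f : Finset V} {a x : V}
    (h : s ∩ f = {a}) (hx : x ∈ s) (hxf : x ∈ f) : x = a := by
  have : x ∈ s ∩ f := mem_inter.mpr ⟨hx, hxf⟩
  rw [h] at this; exact mem_singleton.mp this

lemma sat_link [DecidableEq V] {E : Finset (Finset V)} {t : Finset V}
    (hfree : ¬ HasC3 E) (hadd : HasC3 (insert t E)) (ht : t.card = 3) :
    ∃ f g a c m, f ∈ E ∧ g ∈ E ∧ a ∈ t ∧ c ∈ t ∧ a ≠ c ∧ m ∉ t ∧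
      t ∩ f = {a} ∧ t ∩ g = {c} ∧ f ∩ g = {m} := by
  obtain ⟨e₁, h₁, e₂, h₂, e₃, h₃, a, b, c, h12, h23, h13, hab, hbc, hac, h123⟩ := hadd
  rw [mem_insert] at h₁ h₂ h₃
  rcases h₁ with rfl | h₁
  · rcases h₂ with rfl | h₂
    · rw [inter_self] at h12
      have := congrArg Finset.card h12; simp [ht] at this
    rcases h₃ with rfl | h₃
    · rw [inter_self] at h13
      have := congrArg Finset.card h13; simp [ht] at this
    refine ⟨e₂, e₃, a, c, b, h₂, h₃, (mem_left_of_inter_eq h12).1,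
      (mem_left_of_inter_eq h13).1, hac, ?_, h12, h13, h23⟩
    intro hb
    have hmem : b ∈ e₁ ∩ e₂ ∩ e₃ := by
      simp only [mem_inter]
      exact ⟨⟨hb, (mem_left_of_inter_eq h23).1⟩, (mem_left_of_inter_eq h23).2⟩
    rw [h123] at hmem; exact absurd hmem (notMem_empty b)
  rcases h₂ with rfl | h₂
  · rcases h₃ with rfl | h₃
    · rw [inter_self] at h23
      have := congrArg Finset.card h23; simp [ht] at this
    refine ⟨e₁, e₃, a, b, c, h₁, h₃, (mem_left_of_inter_eq h12).2,
      (mem_left_of_inter_eq h23).1, hab, ?_, by rw [inter_comm]; exact h12, h23, h13⟩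
    intro hc
    have hmem : c ∈ e₁ ∩ e₂ ∩ e₃ := by
      simp only [mem_inter]
      exact ⟨⟨(mem_left_of_inter_eq h13).1, hc⟩, (mem_left_of_inter_eq h13).2⟩
    rw [h123] at hmem; exact absurd hmem (notMem_empty c)
  rcases h₃ with rfl | h₃
  · refine ⟨e₁, e₂, c, b, a, h₁, h₂, (mem_left_of_inter_eq h13).2,
      (mem_left_of_inter_eq h23).2, hbc.symm, ?_, by rw [inter_comm]; exact h13,
      by rw [inter_comm]; exact h23, h12⟩
    intro ha
    have hmem : a ∈ e₁ ∩ e₂ ∩ e₃ := by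
      simp only [mem_inter]
      exact ⟨⟨(mem_left_of_inter_eq h12).1, (mem_left_of_inter_eq h12).2⟩, ha⟩
    rw [h123] at hmem; exact absurd hmem (notMem_empty a)
  · exact absurd ⟨e₁, h₁, e₂, h₂, e₃, h₃, a, b, c, h12, h23, h13, hab, hbc, hac, h123⟩ hfree

theorem few_jfar_neighbors {V : Type*} [Fintype V] [DecidableEq V]
    (E : Finset (Finset V)) (hsat : IsSat3 E) (j : ℕ) (hj : 2 ≤ j) (v : V) :
    ({u : V | JFarNeighbor E j v u}).ncard ≤ 2 * j ^ 2 := by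
  classical
  obtain ⟨huni, hfree, hsatur⟩ := hsat
  by_cases hne : ∃ u₀, JFarNeighbor E j v u₀
  swap
  · have hempty : {u : V | JFarNeighbor E j v u} = ∅ := by
      ext u
      simp only [Set.mem_setOf_eq, Set.mem_empty_iff_false, iff_false]
      exact fun h => hne ⟨u, h⟩
    rw [hempty]; simp
  obtain ⟨u₀, hu₀⟩ := hne
  have hu₀' := hu₀
  obtain ⟨hdu₀, hadj₀, hcond1₀, hcond2₀⟩ := hu₀'
  have hvu₀ : v ≠ u₀ := hadj₀.1
  set A : Finset (Finset V) := E.filter (fun e => u₀ ∈ e ∧ v ∈ e) with hA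
  set Bed : Finset (Finset V) := E.filter (fun e => u₀ ∈ e ∧ v ∉ e) with hBed
  set B : Finset V := Bed.biUnion (fun e => e.erase u₀) with hB
  set Sb : V → Finset V := fun b => univ.filter
    (fun u' => JFarNeighbor E j v u' ∧ ∃ e, e ∈ E ∧ b ∈ e ∧ u' ∈ e ∧ u₀ ∉ e) with hSb
  set T : Finset V := A.biUnion (fun e => e \ {u₀, v}) with hT
  set target : Finset V := insert u₀ (T ∪ B.biUnion Sb) with htarget
  -- the subset claim
  have hsub : {u : V | JFarNeighbor E j v u} ⊆ ↑target := by
    intro u' hu'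
    simp only [Set.mem_setOf_eq] at hu'
    rw [Finset.mem_coe, htarget, mem_insert]
    by_cases he : u' = u₀
    · exact Or.inl he
    right
    rw [mem_union]
    have hvu' : v ≠ u' := hu'.2.1.1
    have hu₀u' : u₀ ≠ u' := fun h => he h.symm
    set t : Finset V := {v, u₀, u'} with htdef
    have hvt : v ∈ t := by simp [htdef]
    have hu₀t : u₀ ∈ t := by simp [htdef]
    have hu't : u' ∈ t := by simp [htdef]
    have ht3 : t.card = 3 := card_eq_three.mpr ⟨v, u₀, u', hvu₀, hvu', hu₀u', rfl⟩
    by_cases htE : t ∈ E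
    · left
      apply mem_biUnion.mpr
      refine ⟨t, mem_filter.mpr ⟨htE, hu₀t, hvt⟩, ?_⟩
      rw [mem_sdiff]
      exact ⟨hu't, by simp [he, hvu'.symm]⟩
    · obtain ⟨f, g, a, c, m, hfE, hgE, hat, hct, hacne, hmt, htf, htg, hfg⟩ :=
        sat_link hfree (hsatur t ht3 htE) ht3
      -- key: neither endpoint of the link is v
      have key : ∀ f g : Finset V, ∀ c m : V, f ∈ E → g ∈ E → c ∈ t →
          t ∩ f = {v} → t ∩ g = {c} → f ∩ g = {m} → m ∉ t → c ≠ v → False := by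
        intro f g c m hfE hgE hct htf htg hfg hmt hcv
        have hwfar : JFarNeighbor E j v c := by
          have : c = v ∨ c = u₀ ∨ c = u' := by
            simpa [htdef] using hct
          rcases this with h | h | h
          · exact absurd h hcv
          · rw [h]; exact hu₀
          · rw [h]; exact hu'
        have hcg : c ∈ g := (mem_left_of_inter_eq htg).2
        have hvg : v ∉ g := by
          intro hvg
          exact hcv (eq_of_inter_eq htg hvt hvg).symm
        have hmg : m ∈ g := (mem_left_of_inter_eq hfg).2
        have hmf : m ∈ f := (mem_left_of_inter_eq hfg).1
        have hmc : m ≠ c := fun h => hmt (h ▸ hct)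
        have hvm : v ≠ m := fun h => hmt (h ▸ hvt)
        have hvf : v ∈ f := (mem_left_of_inter_eq htf).2
        have hadjvm : Adj E v m := ⟨hvm, f, hfE, hvf, hmf⟩
        rcases hwfar.2.2.1 g hgE hcg with h | h
        · exact hvg h
        · exact h m hmg hmc hadjvm
      have hav : a ≠ v := by
        intro h
        rw [h] at htf
        exact key f g c m hfE hgE hct htf htg hfg hmt (fun h' => hacne (h.trans h'.symm))
      have hcv : c ≠ v := by
        intro h
        rw [h] at htg
        exact key g f a m hgE hfE hat htg htf (by rw [inter_comm]; exact hfg) hmt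
          (fun h' => hacne (h'.trans h.symm))
      -- so {a,c} = {u₀,u'} in some order; normalize
      have ha' : a = u₀ ∨ a = u' := by
        have : a = v ∨ a = u₀ ∨ a = u' := by simpa [htdef] using hat
        tauto
      have hc' : c = u₀ ∨ c = u' := by
        have : c = v ∨ c = u₀ ∨ c = u' := by simpa [htdef] using hct
        tauto
      obtain ⟨f', g', hf'E, hg'E, htf', htg', hfg'⟩ :
          ∃ f' g', f' ∈ E ∧ g' ∈ E ∧ t ∩ f' = {u₀} ∧ t ∩ g' = {u'} ∧ f' ∩ g' = {m} := by
        rcases ha' with rfl | rfl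
        · rcases hc' with rfl | rfl
          · exact absurd rfl hacne
          · exact ⟨f, g, hfE, hgE, htf, htg, hfg⟩
        · rcases hc' with rfl | rfl
          · exact ⟨g, f, hgE, hfE, htg, htf, by rw [inter_comm]; exact hfg⟩
          · exact absurd rfl hacne
      right
      apply mem_biUnion.mpr
      have hu₀f' : u₀ ∈ f' := (mem_left_of_inter_eq htf').2
      have hvf' : v ∉ f' := fun h => hvu₀ (eq_of_inter_eq htf' hvt h)
      have hmf' : m ∈ f' := (mem_left_of_inter_eq hfg').1
      have hmg' : m ∈ g' := (mem_left_of_inter_eq hfg').2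
      have hmu₀ : m ≠ u₀ := fun h => hmt (h ▸ hu₀t)
      have hu'g' : u' ∈ g' := (mem_left_of_inter_eq htg').2
      have hu₀g' : u₀ ∉ g' := fun h => hu₀u' (eq_of_inter_eq htg' hu₀t h)
      refine ⟨m, ?_, ?_⟩
      · exact mem_biUnion.mpr ⟨f', mem_filter.mpr ⟨hf'E, hu₀f', hvf'⟩,
          mem_erase.mpr ⟨hmu₀, hmf'⟩⟩
      · exact mem_filter.mpr ⟨mem_univ _, hu', g', hg'E, hmg', hu'g', hu₀g'⟩
  -- cardinality bounds
  have hcardA : A.card ≤ j := by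
    have : A ⊆ E.filter (fun e => u₀ ∈ e) := by
      intro e he
      rw [hA, mem_filter] at he
      exact mem_filter.mpr ⟨he.1, he.2.1⟩
    exact le_trans (card_le_card this) hdu₀
  have hcardBed : Bed.card ≤ j := by
    have : Bed ⊆ E.filter (fun e => u₀ ∈ e) := by
      intro e he
      rw [hBed, mem_filter] at he
      exact mem_filter.mpr ⟨he.1, he.2.1⟩
    exact le_trans (card_le_card this) hdu₀
  have hcardT : T.card ≤ j := by
    have h1 : T.card ≤ A.card * 1 := by
      apply card_biUnion_le_card_mul
      intro e he
      rw [hA, mem_filter] at he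
      have hsub2 : ({u₀, v} : Finset V) ⊆ e := by
        intro x hx
        rcases mem_insert.mp hx with rfl | hx
        · exact he.2.1
        · rw [mem_singleton.mp hx]; exact he.2.2
      have : (e \ {u₀, v}).card = e.card - ({u₀, v} : Finset V).card :=
        card_sdiff_of_subset hsub2
      rw [this, huni e he.1, card_pair (fun h => hvu₀ h.symm)]
    rw [mul_one] at h1
    exact le_trans h1 hcardA
  have hcardB : B.card ≤ 2 * j := by
    have h1 : B.card ≤ Bed.card * 2 := by
      apply card_biUnion_le_card_mul
      intro e he
      rw [hBed, mem_filter] at he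
      rw [card_erase_of_mem he.2.1, huni e he.1]
    calc B.card ≤ Bed.card * 2 := h1
    _ ≤ j * 2 := by exact Nat.mul_le_mul_right 2 hcardBed
    _ = 2 * j := by ring
  have hSbcard : ∀ b ∈ B, (Sb b).card ≤ j - 1 := by
    intro b hb
    obtain ⟨f, hfBed, hbfe⟩ := mem_biUnion.mp hb
    rw [hBed, mem_filter] at hfBed
    obtain ⟨hfE, hu₀f, hvf⟩ := hfBed
    obtain ⟨hbu₀, hbf⟩ := mem_erase.mp hbfe
    have hdegb : deg E b ≤ j := hcond2₀ f hfE hu₀f hvf b hbf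
    have hvb : v ≠ b := fun h => hvf (h ▸ hbf)
    have hnadj : ¬ Adj E v b := by
      rcases hcond1₀ f hfE hu₀f with h | h
      · exact absurd h hvf
      · exact h b hbf hbu₀
    set Eb : Finset (Finset V) := E.filter (fun e => b ∈ e ∧ u₀ ∉ e) with hEb
    have hEbcard : Eb.card ≤ j - 1 := by
      have hsub2 : Eb ⊆ (E.filter (fun e => b ∈ e)).erase f := by
        intro e he
        rw [hEb, mem_filter] at he
        refine mem_erase.mpr ⟨?_, mem_filter.mpr ⟨he.1, he.2.1⟩⟩
        intro h
        exact he.2.2 (h ▸ hu₀f)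
      have h2 := card_le_card hsub2
      rw [card_erase_of_mem (mem_filter.mpr ⟨hfE, hbf⟩)] at h2
      have : (E.filter (fun e => b ∈ e)).card = deg E b := rfl
      omega
    have hinj : (Sb b).card ≤ Eb.card := by
      apply card_le_card_of_injOn
        (fun u' => if h : ∃ e, e ∈ E ∧ b ∈ e ∧ u' ∈ e ∧ u₀ ∉ e then h.choose else ∅)
      · intro u' hu'mem
        simp only [Finset.mem_coe, hSb, mem_filter] at hu'mem ⊢
        obtain ⟨-, hfar, hex⟩ := hu'mem
        rw [dif_pos hex]
        obtain ⟨h1, h2, h3, h4⟩ := hex.choose_spec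
        exact mem_filter.mpr ⟨h1, h2, h4⟩
      · intro x hx y hy hxy
        have hx' : x ∈ Sb b := hx
        have hy' : y ∈ Sb b := hy
        simp only [hSb, mem_filter, mem_univ, true_and] at hx' hy'
        obtain ⟨hxfar, hxex⟩ := hx'
        obtain ⟨hyfar, hyex⟩ := hy'
        simp only [dif_pos hxex, dif_pos hyex] at hxy
        obtain ⟨hx1, hx2, hx3, hx4⟩ := hxex.choose_spec
        obtain ⟨hy1, hy2, hy3, hy4⟩ := hyex.choose_spec
        rw [← hxy] at hy3
        set e := hxex.choose
        have hve : v ∉ e := by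
          intro hve
          exact hnadj ⟨hvb, e, hx1, hve, hx2⟩
        by_contra hne'
        rcases hxfar.2.2.1 e hx1 hx3 with h | h
        · exact hve h
        · exact h y hy3 (fun h' => hne' h'.symm) hyfar.2.1
    exact le_trans hinj hEbcard
  have hcardS : (B.biUnion Sb).card ≤ 2 * j * (j - 1) := by
    calc (B.biUnion Sb).card ≤ B.card * (j - 1) := card_biUnion_le_card_mul _ _ _ hSbcard
    _ ≤ 2 * j * (j - 1) := Nat.mul_le_mul_right _ hcardB
  have htargetcard : target.card ≤ 1 + j + 2 * j * (j - 1) := by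
    calc target.card ≤ (T ∪ B.biUnion Sb).card + 1 := card_insert_le _ _
    _ ≤ T.card + (B.biUnion Sb).card + 1 := by
        exact Nat.add_le_add_right (card_union_le _ _) 1
    _ ≤ j + 2 * j * (j - 1) + 1 := by
        exact Nat.add_le_add_right (Nat.add_le_add hcardT hcardS) 1
    _ = 1 + j + 2 * j * (j - 1) := by ring
  have hfinal : 1 + j + 2 * j * (j - 1) ≤ 2 * j ^ 2 := by
    obtain ⟨k, rfl⟩ : ∃ k, j = k + 2 := ⟨j - 2, by omega⟩
    have : (k + 2) - 1 = k + 1 := by omega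
    rw [this]
    ring_nf
    nlinarith
  calc ({u : V | JFarNeighbor E j v u}).ncard
      ≤ (↑target : Set V).ncard := Set.ncard_le_ncard hsub target.finite_toSet
    _ = target.card := Set.ncard_coe_finset target
    _ ≤ 2 * j ^ 2 := le_trans htargetcard hfinal
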